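/- Let p be a prime, q a power of p, m an integer (possibly negative), and k a natural number with 0 ≤ k < q. Then the generalized binomial coefficients satisfy C(q + m, k) ≡ C(m, k) (mod p), where C(m, k) = m(m-1)···(m-k+1)/k! is the integer-valued generalized binomial coefficient. -/

import Mathlib

theorem stmt_8 (p : ℕ) (hp : p.Prime) (e : ℕ) (q : ℕ) (hq : q = p ^ e)
    (m : ℤ) (k : ℕ) (hk : k < q) :
    Ring.choose ((q : ℤ) + m) k ≡ Ring.choose m k [ZMOD p] := by
  rw [Ring.add_choose_eq k (Commute.all _ _)]
  have hmem : ((0 : ℕ), k) ∈ Finset.HasAntidiagonal.antidiagonal k := by simp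
  rw [Finset.sum_eq_sum_sdiff_singleton_add hmem]
  have h0 : Ring.choose ((q : ℤ)) (0 : ℕ) * Ring.choose m k = Ring.choose m k := by
    rw [Ring.choose_zero_right, one_mul]
  rw [h0]
  have : (Finset.HasAntidiagonal.antidiagonal k \ {((0:ℕ), k)}).sum
      (fun ij => Ring.choose ((q : ℤ)) ij.1 * Ring.choose m ij.2) ≡ 0 [ZMOD p] := by
    have hdvd : (p : ℤ) ∣ (Finset.HasAntidiagonal.antidiagonal k \ {((0:ℕ), k)}).sum
        (fun ij => Ring.choose ((q : ℤ)) ij.1 * Ring.choose m ij.2) := by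
      refine Finset.dvd_sum fun ij hij => ?_
      obtain ⟨hij1, hij2⟩ := Finset.mem_sdiff.mp hij
      have hadd : ij.1 + ij.2 = k := Finset.HasAntidiagonal.mem_antidiagonal.mp hij1
      have h1 : ij.1 ≠ 0 := by
        intro h
        apply hij2
        simp only [Finset.mem_singleton]
        have : ij.2 = k := by omega
        exact Prod.ext h this
      have h2 : ij.1 ≠ p ^ e := by
        intro h
        have : ij.1 ≤ k := by omega
        omega
      have hd : p ∣ q.choose ij.1 := by
        rw [hq]; exact hp.dvd_choose_pow h1 h2
      have : Ring.choose ((q : ℤ)) ij.1 = (q.choose ij.1 : ℤ) := Ring.choose_natCast q ij.1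
      rw [this]
      exact Dvd.dvd.mul_right (Int.natCast_dvd_natCast.mpr hd) _
    exact (Int.modEq_zero_iff_dvd).mpr hdvd
  calc _ ≡ 0 + Ring.choose m k [ZMOD (p:ℤ)] := Int.ModEq.add this (Int.ModEq.refl _)
    _ = Ring.choose m k := by ring
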